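/- Generalized Cesàro integral representation: for every integer p ≥ 0, every n ≥ 1, and every real x, B_n^p(x) = (2·n!/π)·Im ∫_0^π exp(x·σ^p(e^{it}))·sin(n·t) dt, where σ^p : ℂ → ℂ is the p-fold iterate of z ↦ e^z − 1 (σ^0 = id). -/

import Mathlib

/-- Stirling numbers of the second kind. -/
def S2 : ℕ → ℕ → ℕ
  | 0, 0 => 1
  | 0, _ + 1 => 0
  | _ + 1, 0 => 0
  | n + 1, m + 1 => (m + 1) * S2 n (m + 1) + S2 n m

/-- Entries `S^p_{n,m}` of the `p`-th power of the Stirling matrix (for `p ≥ 1`;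
the value at `p = 0` is junk). -/
def Sp : ℕ → ℕ → ℕ → ℕ
  | 0, _, _ => 0
  | 1, n, m => S2 n m
  | p + 2, n, m => ∑ k ∈ Finset.range (n + 1), S2 n k * Sp (p + 1) k m

/-- Higher order Bell polynomials: `B_n^0(x) = x^n`, `B_n^p(x) = ∑_{m=0}^n S^p_{n,m} x^m`. -/
noncomputable def BellP : ℕ → ℕ → ℝ → ℝ
  | 0, n, x => x ^ n
  | p + 1, n, x => ∑ m ∈ Finset.range (n + 1), (Sp (p + 1) n m : ℝ) * x ^ m

/-- `σ^p : ℂ → ℂ`, the `p`-fold iterate of `z ↦ e^z - 1` (with `σ^0 = id`). -/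
noncomputable def sigmaC (p : ℕ) : ℂ → ℂ := (fun z => Complex.exp z - 1)^[p]

def cf : ℕ → ℕ → ℕ → ℕ
  | 0, n, m => if m = n then 1 else 0
  | p + 1, n, m => ∑ k ∈ Finset.range (n + 1), S2 n k * cf p k m

lemma S2_eq_zero : ∀ {n m : ℕ}, n < m → S2 n m = 0
  | 0, 0, h => absurd h (lt_irrefl _)
  | 0, _ + 1, _ => rfl
  | n + 1, 0, h => absurd h (Nat.not_lt_zero _)
  | n + 1, m + 1, h => by
      have h1 : n < m + 1 := by omega
      have h2 : n < m := by omega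
      simp [S2, S2_eq_zero h1, S2_eq_zero h2]

lemma cf_eq_zero : ∀ (p : ℕ) {n m : ℕ}, n < m → cf p n m = 0
  | 0, n, m, h => by simp [cf]; omega
  | p + 1, n, m, h => by
      simp only [cf]
      refine Finset.sum_eq_zero fun k hk => ?_
      have : k < m := by simp at hk; omega
      simp [cf_eq_zero p this]

lemma cf_one (n m : ℕ) : cf 1 n m = S2 n m := by
  simp only [cf]
  rcases le_or_gt m n with h | h
  · rw [Finset.sum_eq_single m]
    · simp
    · intro k hk hne; simp [Ne.symm hne]
    · intro hm; exfalso; apply hm; simp; omega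
  · rw [S2_eq_zero h]
    refine Finset.sum_eq_zero fun k hk => ?_
    simp at hk
    simp [show m ≠ k by omega]

lemma cf_eq_Sp : ∀ (p n m : ℕ), cf (p + 1) n m = Sp (p + 1) n m
  | 0, n, m => by rw [cf_one]; rfl
  | p + 1, n, m => by
      rw [show cf (p + 2) n m = ∑ k ∈ Finset.range (n + 1), S2 n k * cf (p + 1) k m from rfl,
        show Sp (p + 2) n m = ∑ k ∈ Finset.range (n + 1), S2 n k * Sp (p + 1) k m from rfl]
      exact Finset.sum_congr rfl fun k _ => by rw [cf_eq_Sp p k m]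

-- parity helper
lemma neg_one_pow_sub {R : Type*} [Monoid R] [HasDistribNeg R] {m k : ℕ} (h : m ≤ k) :
    (-1 : R) ^ (k - m) = (-1) ^ (k + m) := by
  conv_rhs => rw [show k + m = (k - m) + 2 * m by omega]
  rw [pow_add, pow_mul, neg_one_sq, one_pow, mul_one]

/-- surjection formula -/
lemma stirling_formula {R : Type*} [CommRing R] (n k : ℕ) :
    ((k.factorial * S2 n k : ℕ) : R) =
      ∑ j ∈ Finset.range (k + 1), (-1 : R) ^ (k - j) * (k.choose j) * (j : R) ^ n := by
  induction n generalizing k with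
  | zero =>
      have h := sub_pow (1 : R) 1 k
      simp only [sub_self, one_pow, mul_one, one_mul] at h
      rcases Nat.eq_zero_or_pos k with rfl | hk
      · simp [S2]
      · rw [zero_pow (by omega)] at h
        have h0 : ((k.factorial * S2 0 k : ℕ) : R) = 0 := by
          cases k with | zero => omega | succ k => simp [S2]
        rw [h0, h]
        refine Finset.sum_congr rfl fun j hj => ?_
        simp only [Finset.mem_range] at hj
        rw [neg_one_pow_sub (by omega : j ≤ k), pow_zero, mul_one, add_comm]
  | succ n ih =>
      cases k with
      | zero => simp [S2]
      | succ K =>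
        -- LHS recursion
        have hL : ((K+1).factorial * S2 (n+1) (K+1) : ℕ) =
            (K+1) * ((K+1).factorial * S2 n (K+1)) + (K+1) * (K.factorial * S2 n K) := by
          show (K+1).factorial * ((K+1) * S2 n (K+1) + S2 n K) = _
          rw [Nat.factorial_succ]
          ring
        have hL2 : (((K+1).factorial * S2 (n+1) (K+1) : ℕ) : R) =
            ((K+1:ℕ):R) * (((K+1).factorial * S2 n (K+1) : ℕ) : R)
              + ((K+1:ℕ):R) * ((K.factorial * S2 n K : ℕ) : R) := by
          rw [hL]; push_cast; ring
        rw [hL2, ih (K+1), ih K, ← mul_add]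
        -- key binomial identity
        have key : ∀ i : ℕ, (((K+1).choose (i+1) : ℕ) : R) * ((i:R)+1) = (K+1) * (K.choose i) := by
          intro i
          have : (K+1) * K.choose i = (K+1).choose (i+1) * (i+1) := Nat.add_one_mul_choose_eq K i
          have := congrArg (fun t : ℕ => (t : R)) this
          push_cast at this
          linear_combination -this
        -- expand RHS sum
        rw [Finset.sum_range_succ' (fun j => (-1 : R)^(K+1-j) * (((K+1).choose j) : R) * (j:R)^(n+1)) (K+1)]
        have e0 : (-1 : R)^(K+1-0) * (((K+1).choose 0 : ℕ) : R) * ((0:ℕ):R)^(n+1) = 0 := by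
          simp
        rw [e0, add_zero]
        have e1 : ∀ i ∈ Finset.range (K+1),
            (-1 : R)^(K+1-(i+1)) * (((K+1).choose (i+1) : ℕ) : R) * (((i+1:ℕ)):R)^(n+1)
              = (K+1) * ((-1 : R)^(K-i) * (K.choose i) * ((i:R)+1)^n) := by
          intro i hi
          have h1 : K+1-(i+1) = K-i := by omega
          rw [h1]
          push_cast
          calc (-1 : R)^(K-i) * ((K+1).choose (i+1) : ℕ) * ((i:R)+1)^(n+1)
              = (-1 : R)^(K-i) * ((((K+1).choose (i+1) : ℕ):R) * ((i:R)+1)) * ((i:R)+1)^n := by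
                rw [pow_succ]; ring
            _ = _ := by rw [key i]; ring
        rw [Finset.sum_congr rfl e1, ← Finset.mul_sum]
        have hc : (((K+1):ℕ):R) = (K:R)+1 := by push_cast; ring
        rw [hc]
        -- now suffices: T n (K+1) + T n K = main sum
        congr 1
        -- expand T n (K+1)
        rw [Finset.sum_range_succ' (fun j => (-1 : R)^(K+1-j) * (((K+1).choose j) : R) * (j:R)^n) (K+1)]
        rw [Finset.sum_range_succ' (fun j => (-1 : R)^(K-j) * ((K.choose j) : R) * (j:R)^n) K]
        have e2 : ∀ i ∈ Finset.range (K+1),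
            (-1 : R)^(K+1-(i+1)) * (((K+1).choose (i+1) : ℕ) : R) * (((i+1:ℕ)):R)^n
              = (-1 : R)^(K-i) * (K.choose i) * ((i:R)+1)^n
                + (-1 : R)^(K-i) * (K.choose (i+1)) * ((i:R)+1)^n := by
          intro i hi
          have h1 : K+1-(i+1) = K-i := by omega
          rw [h1, Nat.choose_succ_succ]
          push_cast
          ring
        rw [Finset.sum_congr rfl e2, Finset.sum_add_distrib]
        have e3 : ∑ i ∈ Finset.range (K+1), (-1 : R)^(K-i) * (K.choose (i+1)) * ((i:R)+1)^n
            = - ∑ i ∈ Finset.range K, (-1 : R)^(K-(i+1)) * ((K.choose (i+1)) : R) * (((i+1:ℕ)):R)^n := by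
          rw [Finset.sum_range_succ, Nat.choose_succ_self]
          push_cast
          rw [mul_zero, zero_mul, add_zero, ← Finset.sum_neg_distrib]
          refine Finset.sum_congr rfl fun i hi => ?_
          simp only [Finset.mem_range] at hi
          have h1 : K - i = (K - (i+1)) + 1 := by omega
          rw [h1, pow_succ]
          ring
        rw [e3]
        have e4 : (-1 : R)^(K+1-0) * (((K+1).choose 0 : ℕ) : R) * ((0:ℕ):R)^n
            = - ((-1 : R)^(K-0) * ((K.choose 0 : ℕ) : R) * ((0:ℕ):R)^n) := by
          have h1 : K+1-0 = (K-0)+1 := by omega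
          rw [h1, pow_succ]
          simp
        rw [e4]
        ring


noncomputable def sigR (p : ℕ) : ℝ → ℝ := (fun r => Real.exp r - 1)^[p]

noncomputable def fC (p n : ℕ) (x : ℂ) : ℂ := ∑ m ∈ Finset.range (n + 1), (cf p n m : ℂ) * x ^ m

noncomputable def fR (p n : ℕ) (r : ℝ) : ℝ := ∑ m ∈ Finset.range (n + 1), (cf p n m : ℝ) * r ^ m

lemma fC_zero (n : ℕ) (x : ℂ) : fC 0 n x = x ^ n := by
  unfold fC
  rw [Finset.sum_eq_single n]
  · simp [cf]
  · intro m hm hne; simp [cf, hne]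
  · intro h; exact absurd (Finset.self_mem_range_succ n) h

lemma BellP_eq (p n : ℕ) (x : ℝ) : BellP p n x = fR p n x := by
  cases p with
  | zero =>
      show x ^ n = _
      unfold fR
      rw [Finset.sum_eq_single n]
      · simp [cf]
      · intro m hm hne; simp [cf, hne]
      · intro h; exact absurd (Finset.self_mem_range_succ n) h
  | succ p =>
      show (∑ m ∈ Finset.range (n + 1), (Sp (p + 1) n m : ℝ) * x ^ m) = _
      unfold fR
      exact Finset.sum_congr rfl fun m _ => by rw [← cf_eq_Sp]

lemma fC_ofReal (p n : ℕ) (r : ℝ) : fC p n (r : ℂ) = ((fR p n r : ℝ) : ℂ) := by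
  unfold fC fR; push_cast; rfl

lemma fR_nonneg (p n : ℕ) {r : ℝ} (hr : 0 ≤ r) : 0 ≤ fR p n r :=
  Finset.sum_nonneg fun m _ => mul_nonneg (Nat.cast_nonneg _) (pow_nonneg hr m)

lemma norm_fC_le (p n : ℕ) (x : ℂ) : ‖fC p n x‖ ≤ fR p n ‖x‖ := by
  refine (norm_sum_le _ _).trans_eq ?_
  unfold fR
  refine Finset.sum_congr rfl fun m _ => ?_
  rw [norm_mul, norm_pow, Complex.norm_natCast]

lemma abs_fR_le (p n : ℕ) (x : ℝ) : |fR p n x| ≤ fR p n |x| := by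
  have h := norm_fC_le p n (x : ℂ)
  rw [fC_ofReal, Complex.norm_real, Complex.norm_real] at h
  simpa using h

lemma fC_succ (p n : ℕ) (x : ℂ) :
    fC (p + 1) n x = ∑ k ∈ Finset.range (n + 1), (S2 n k : ℂ) * fC p k x := by
  unfold fC
  have hcf : ∀ m, (cf (p + 1) n m : ℂ) = ∑ k ∈ Finset.range (n + 1), (S2 n k : ℂ) * (cf p k m : ℂ) := by
    intro m
    rw [show cf (p + 1) n m = ∑ k ∈ Finset.range (n + 1), S2 n k * cf p k m from rfl]
    push_cast; rfl
  calc ∑ m ∈ Finset.range (n + 1), (cf (p + 1) n m : ℂ) * x ^ m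
      = ∑ m ∈ Finset.range (n + 1), ∑ k ∈ Finset.range (n + 1),
          (S2 n k : ℂ) * ((cf p k m : ℂ) * x ^ m) := by
        refine Finset.sum_congr rfl fun m _ => ?_
        rw [hcf m, Finset.sum_mul]
        exact Finset.sum_congr rfl fun k _ => by ring
    _ = ∑ k ∈ Finset.range (n + 1), (S2 n k : ℂ) *
          ∑ m ∈ Finset.range (n + 1), (cf p k m : ℂ) * x ^ m := by
        rw [Finset.sum_comm]
        exact Finset.sum_congr rfl fun k _ => by rw [Finset.mul_sum]
    _ = _ := by
        refine Finset.sum_congr rfl fun k hk => ?_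
        congr 1
        symm
        apply Finset.sum_subset
        · intro m hm
          simp only [Finset.mem_range] at hm hk ⊢
          omega
        · intro m hm hnm
          simp only [Finset.mem_range] at hm hnm
          rw [cf_eq_zero p (by omega), Nat.cast_zero, zero_mul]

lemma sigmaC_ofReal (p : ℕ) (r : ℝ) : sigmaC p (r : ℂ) = ((sigR p r : ℝ) : ℂ) := by
  induction p generalizing r with
  | zero => rfl
  | succ p ih =>
      show (fun z => Complex.exp z - 1)^[p + 1] (r : ℂ) = _
      rw [Function.iterate_succ_apply]
      have h1 : Complex.exp (r : ℂ) - 1 = ((Real.exp r - 1 : ℝ) : ℂ) := by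
        rw [Complex.ofReal_sub, Complex.ofReal_exp, Complex.ofReal_one]
      rw [h1]
      have h2 : sigR (p + 1) r = sigR p (Real.exp r - 1) := Function.iterate_succ_apply _ p r
      rw [h2]
      exact ih _

lemma stirlingEGF (k : ℕ) (w : ℂ) :
    HasSum (fun n => (S2 n k : ℂ) * w ^ n / n.factorial)
      ((Complex.exp w - 1) ^ k / k.factorial) := by
  have hexp : ∀ j : ℕ, HasSum (fun n => ((j : ℂ) * w) ^ n / n.factorial)
      (Complex.exp ((j : ℂ) * w)) := by
    intro j
    rw [Complex.exp_eq_exp_ℂ]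
    exact NormedSpace.expSeries_div_hasSum_exp _
  have h1 : HasSum
      (fun n => ∑ j ∈ Finset.range (k + 1),
        (-1 : ℂ) ^ (k - j) * (k.choose j) * (((j : ℂ) * w) ^ n / n.factorial))
      (∑ j ∈ Finset.range (k + 1),
        (-1 : ℂ) ^ (k - j) * (k.choose j) * Complex.exp ((j : ℂ) * w)) :=
    hasSum_sum fun j _ => (hexp j).mul_left _
  have h2 : (∑ j ∈ Finset.range (k + 1),
      (-1 : ℂ) ^ (k - j) * (k.choose j) * Complex.exp ((j : ℂ) * w))
        = (Complex.exp w - 1) ^ k := by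
    rw [sub_pow]
    refine Finset.sum_congr rfl fun j hj => ?_
    simp only [Finset.mem_range] at hj
    rw [Complex.exp_nat_mul, one_pow, neg_one_pow_sub (by omega : j ≤ k)]
    ring
  have h3 : (fun n => ∑ j ∈ Finset.range (k + 1),
      (-1 : ℂ) ^ (k - j) * (k.choose j) * (((j : ℂ) * w) ^ n / n.factorial))
        = fun n => ((k.factorial * S2 n k : ℕ) : ℂ) * w ^ n / n.factorial := by
    funext n
    rw [stirling_formula (R := ℂ) n k, Finset.sum_mul, Finset.sum_div]
    refine Finset.sum_congr rfl fun j _ => ?_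
    rw [mul_pow]; ring
  rw [h3, h2] at h1
  have h4 := h1.div_const (k.factorial : ℂ)
  refine h4.congr_fun fun n => ?_
  have hk : (k.factorial : ℂ) ≠ 0 := Nat.cast_ne_zero.2 k.factorial_ne_zero
  push_cast
  field_simp

lemma stirlingEGF_real (k : ℕ) (r : ℝ) :
    HasSum (fun n => (S2 n k : ℝ) * r ^ n / n.factorial)
      ((Real.exp r - 1) ^ k / k.factorial) := by
  have h := stirlingEGF k (r : ℂ)
  rw [show Complex.exp (r : ℂ) - 1 = ((Real.exp r - 1 : ℝ) : ℂ) by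
      rw [Complex.ofReal_sub, Complex.ofReal_exp, Complex.ofReal_one]] at h
  rw [show (((Real.exp r - 1 : ℝ) : ℂ)) ^ k / (k.factorial : ℂ)
      = (((Real.exp r - 1) ^ k / k.factorial : ℝ) : ℂ) by push_cast; ring] at h
  rw [show (fun n => (S2 n k : ℂ) * (r : ℂ) ^ n / (n.factorial : ℂ))
      = fun n => (((S2 n k : ℝ) * r ^ n / n.factorial : ℝ) : ℂ) by
        funext n; push_cast; ring] at h
  exact Complex.hasSum_ofReal.mp h

set_option maxHeartbeats 2000000 in
lemma mainHasSum : ∀ (p : ℕ) (x w : ℂ),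
    HasSum (fun n => fC p n x * (w ^ n / n.factorial)) (Complex.exp (x * sigmaC p w))
  | 0, x, w => by
      have h := NormedSpace.expSeries_div_hasSum_exp (x * w)
      rw [← Complex.exp_eq_exp_ℂ] at h
      have hs : sigmaC 0 w = w := rfl
      rw [hs]
      refine h.congr_fun fun n => ?_
      rw [fC_zero, mul_pow]
      ring
  | (p + 1), x, w => by
      set v := Complex.exp w - 1 with hv
      have hsig : sigmaC (p + 1) w = sigmaC p v := Function.iterate_succ_apply _ p w
      have IH := mainHasSum p x v
      have rows : ∀ k, HasSum (fun n => fC p k x * ((S2 n k : ℂ) * w ^ n / n.factorial))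
          (fC p k x * (v ^ k / k.factorial)) := fun k => (stirlingEGF k w).mul_left _
      -- real bound family
      set H : ℕ × ℕ → ℝ := fun q =>
        fR p q.1 ‖x‖ * ((S2 q.2 q.1 : ℝ) * ‖w‖ ^ q.2 / q.2.factorial) with hH
      have hrowR : ∀ k, HasSum (fun n => H (k, n))
          (fR p k ‖x‖ * ((Real.exp ‖w‖ - 1) ^ k / k.factorial)) :=
        fun k => (stirlingEGF_real k ‖w‖).mul_left _
      have IHreal : HasSum (fun k => fR p k ‖x‖ * ((Real.exp ‖w‖ - 1) ^ k / k.factorial))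
          (Real.exp (‖x‖ * sigR p (Real.exp ‖w‖ - 1))) := by
        have h := mainHasSum p ((‖x‖ : ℝ) : ℂ) (((Real.exp ‖w‖ - 1 : ℝ)) : ℂ)
        rw [sigmaC_ofReal] at h
        rw [show ((‖x‖ : ℝ) : ℂ) * ((sigR p (Real.exp ‖w‖ - 1) : ℝ) : ℂ)
            = ((‖x‖ * sigR p (Real.exp ‖w‖ - 1) : ℝ) : ℂ) by push_cast; ring] at h
        rw [← Complex.ofReal_exp] at h
        rw [show (fun k => fC p k ((‖x‖ : ℝ) : ℂ) * (((Real.exp ‖w‖ - 1 : ℝ) : ℂ) ^ k / (k.factorial : ℂ)))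
            = fun k => ((fR p k ‖x‖ * ((Real.exp ‖w‖ - 1) ^ k / k.factorial) : ℝ) : ℂ) by
              funext k; rw [fC_ofReal]; push_cast; ring] at h
        exact Complex.hasSum_ofReal.mp h
      have hHnonneg : ∀ q, 0 ≤ H q := by
        intro q
        exact mul_nonneg (fR_nonneg _ _ (norm_nonneg _))
          (div_nonneg (mul_nonneg (Nat.cast_nonneg _) (pow_nonneg (norm_nonneg _) _))
            (Nat.cast_nonneg _))
      have hHsum : Summable H := by
        rw [summable_prod_of_nonneg hHnonneg]
        constructor
        · exact fun k => (hrowR k).summable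
        · apply Summable.congr IHreal.summable
          intro k
          exact ((hrowR k).tsum_eq).symm
      set g : ℕ × ℕ → ℂ := fun q =>
        fC p q.1 x * ((S2 q.2 q.1 : ℂ) * w ^ q.2 / q.2.factorial) with hg
      have hgsum : Summable g := by
        apply Summable.of_norm_bounded (g := H) hHsum
        intro q
        rw [hg]
        simp only
        rw [norm_mul]
        apply mul_le_mul (norm_fC_le _ _ _) (le_of_eq ?_)
          (norm_nonneg _) (fR_nonneg _ _ (norm_nonneg _))
        rw [norm_div, norm_mul, norm_pow, Complex.norm_natCast, Complex.norm_natCast]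
      have htot : HasSum g (Complex.exp (x * sigmaC p v)) := by
        have h1 := hgsum.hasSum
        have h2 := h1.prod_fiberwise rows
        rwa [h2.unique IH] at h1
      have cols : ∀ n, HasSum (fun k => g (k, n)) (fC (p + 1) n x * (w ^ n / n.factorial)) := by
        intro n
        have hzero : ∀ k ∉ Finset.range (n + 1), g (k, n) = 0 := by
          intro k hk
          simp only [Finset.mem_range] at hk
          have : S2 n k = 0 := S2_eq_zero (by omega)
          simp [hg, this]
        have hs := hasSum_sum_of_ne_finset_zero (L := SummationFilter.unconditional ℕ) hzero
        have hval : (∑ k ∈ Finset.range (n + 1), g (k, n))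
            = fC (p + 1) n x * (w ^ n / n.factorial) := by
          rw [fC_succ, Finset.sum_mul]
          refine Finset.sum_congr rfl fun k _ => ?_
          rw [hg]
          simp only
          ring
        exact hval ▸ hs
      have hswap : HasSum (fun q : ℕ × ℕ => g (q.2, q.1)) (Complex.exp (x * sigmaC p v)) := by
        exact (Equiv.prodComm ℕ ℕ).hasSum_iff.mpr htot
      rw [hsig]
      exact hswap.prod_fiberwise cols

lemma mainHasSum_real (p : ℕ) (a b : ℝ) :
    HasSum (fun k => fR p k a * (b ^ k / k.factorial)) (Real.exp (a * sigR p b)) := by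
  have h := mainHasSum p (a : ℂ) (b : ℂ)
  rw [sigmaC_ofReal] at h
  rw [show ((a : ℂ)) * ((sigR p b : ℝ) : ℂ) = ((a * sigR p b : ℝ) : ℂ) by push_cast; ring,
    ← Complex.ofReal_exp] at h
  rw [show (fun k => fC p k (a : ℂ) * ((b : ℂ) ^ k / (k.factorial : ℂ)))
      = fun k => ((fR p k a * (b ^ k / k.factorial) : ℝ) : ℂ) by
        funext k; rw [fC_ofReal]; push_cast; ring] at h
  exact Complex.hasSum_ofReal.mp h

lemma int_exp_int (k : ℤ) (hk : k ≠ 0) :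
    (∫ t in (0:ℝ)..Real.pi, Complex.exp ((k : ℂ) * Complex.I * t)) =
      ((-1 : ℂ) ^ k - 1) / ((k : ℂ) * Complex.I) := by
  have hc : (k : ℂ) * Complex.I ≠ 0 := mul_ne_zero (Int.cast_ne_zero.2 hk) Complex.I_ne_zero
  rw [show (fun t : ℝ => Complex.exp ((k : ℂ) * Complex.I * t))
      = fun t : ℝ => Complex.exp (((k : ℂ) * Complex.I) * t) from rfl,
    integral_exp_mul_complex hc]
  congr 1
  rw [Complex.ofReal_zero, mul_zero, Complex.exp_zero]
  congr 1
  rw [show (k : ℂ) * Complex.I * (Real.pi : ℂ) = (k : ℂ) * ((Real.pi : ℂ) * Complex.I) by ring,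
    Complex.exp_int_mul, Complex.exp_pi_mul_I]

lemma hint_exp (c : ℂ) : IntervalIntegrable (fun t : ℝ => Complex.exp (c * t))
    MeasureTheory.volume 0 Real.pi :=
  (Complex.continuous_exp.comp (continuous_const.mul Complex.continuous_ofReal)).intervalIntegrable _ _

lemma J_eq (n : ℕ) (hn : 1 ≤ n) (m : ℕ) :
    (∫ t in (0:ℝ)..Real.pi,
        Complex.exp (Complex.I * m * t) * (Real.sin (n * t) : ℂ)).im
      = if m = n then Real.pi / 2 else 0 := by
  set a : ℤ := (m : ℤ) - n with ha
  set b : ℤ := (m : ℤ) + n with hb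
  have hdecomp : ∀ t : ℝ, Complex.exp (Complex.I * m * t) * (Real.sin (n * t) : ℂ)
      = (Complex.exp ((a : ℂ) * Complex.I * t)
          - Complex.exp ((b : ℂ) * Complex.I * t)) * Complex.I / 2 := by
    intro t
    rw [Complex.ofReal_sin, Complex.sin]
    have h1 : Complex.exp (Complex.I * m * t) * Complex.exp (-((((n : ℝ) * t : ℝ)) : ℂ) * Complex.I)
        = Complex.exp ((a : ℂ) * Complex.I * t) := by
      rw [← Complex.exp_add]; congr 1; rw [ha]; push_cast; ring
    have h2 : Complex.exp (Complex.I * m * t) * Complex.exp (((((n : ℝ) * t : ℝ)) : ℂ) * Complex.I)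
        = Complex.exp ((b : ℂ) * Complex.I * t) := by
      rw [← Complex.exp_add]; congr 1; rw [hb]; push_cast; ring
    calc Complex.exp (Complex.I * m * t)
          * ((Complex.exp (-((((n : ℝ) * t : ℝ)) : ℂ) * Complex.I)
            - Complex.exp (((((n : ℝ) * t : ℝ)) : ℂ) * Complex.I)) * Complex.I / 2)
        = (Complex.exp (Complex.I * m * t) * Complex.exp (-((((n : ℝ) * t : ℝ)) : ℂ) * Complex.I)
            - Complex.exp (Complex.I * m * t) * Complex.exp (((((n : ℝ) * t : ℝ)) : ℂ) * Complex.I))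
            * Complex.I / 2 := by ring
      _ = _ := by rw [h1, h2]
  rw [show (fun t : ℝ => Complex.exp (Complex.I * m * t) * (Real.sin (n * t) : ℂ))
      = fun t : ℝ => (Complex.exp ((a : ℂ) * Complex.I * t)
          - Complex.exp ((b : ℂ) * Complex.I * t)) * Complex.I / 2 from funext hdecomp]
  rw [intervalIntegral.integral_div, intervalIntegral.integral_mul_const,
    intervalIntegral.integral_sub (hint_exp _) (hint_exp _)]
  have hbne : b ≠ 0 := by omega
  have hIb := int_exp_int b hbne
  by_cases hmn : m = n
  · subst hmn
    have ha0 : a = 0 := by omega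
    have h1 : (∫ t in (0:ℝ)..Real.pi, Complex.exp ((a : ℂ) * Complex.I * t)) = (Real.pi : ℂ) := by
      rw [ha0]
      simp
    have hb2 : b = 2 * (m : ℤ) := by omega
    have h2 : ((-1 : ℂ) ^ b - 1) = 0 := by
      rw [hb2, zpow_mul]
      norm_num
    rw [h1, hIb, h2, zero_div, sub_zero]
    rw [if_pos rfl]
    simp [Complex.div_im]
  · have hane : a ≠ 0 := by omega
    have hIa := int_exp_int a hane
    rw [hIa, hIb, if_neg hmn]
    have hval : (((-1 : ℂ) ^ a - 1) / ((a : ℂ) * Complex.I)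
        - ((-1 : ℂ) ^ b - 1) / ((b : ℂ) * Complex.I)) * Complex.I / 2
          = (((((-1 : ℝ) ^ a - 1) / a - ((-1 : ℝ) ^ b - 1) / b) / 2 : ℝ) : ℂ) := by
      have haC : (a : ℂ) ≠ 0 := Int.cast_ne_zero.2 hane
      have hbC : (b : ℂ) ≠ 0 := Int.cast_ne_zero.2 hbne
      have hcast : ∀ j : ℤ, ((-1 : ℂ) ^ j) = (((-1 : ℝ) ^ j : ℝ) : ℂ) := by
        intro j; push_cast; ring
      rw [hcast a, hcast b]
      push_cast
      field_simp
    rw [hval, Complex.ofReal_im]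

set_option maxHeartbeats 1000000 in
/-- Generalized Cesàro integral representation:
`B_n^p(x) = (2 n!/π) · Im ∫_0^π exp(x σ^p(e^{it})) sin(nt) dt`. -/
theorem generalized_cesaro (p n : ℕ) (hn : 1 ≤ n) (x : ℝ) :
    BellP p n x =
      (2 * n.factorial / Real.pi) *
        (∫ t in (0:ℝ)..Real.pi,
            Complex.exp (x * sigmaC p (Complex.exp (Complex.I * t))) * Real.sin (n * t)).im := by
  set c : ℕ → ℝ := fun m => fR p m x / m.factorial with hc
  set G : ℕ → ℝ → ℂ := fun m t =>
    (c m : ℂ) * (Complex.exp (Complex.I * m * t) * (Real.sin (n * t) : ℂ)) with hG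
  have HS : ∀ t : ℝ, HasSum (fun m => G m t)
      (Complex.exp (x * sigmaC p (Complex.exp (Complex.I * t))) * (Real.sin (n * t) : ℂ)) := by
    intro t
    have h := (mainHasSum p (x : ℂ) (Complex.exp (Complex.I * t))).mul_right
      ((Real.sin ((n : ℝ) * t) : ℝ) : ℂ)
    refine h.congr_fun fun m => ?_
    rw [hG, hc]
    simp only
    rw [fC_ofReal,
      show Complex.exp (Complex.I * (t : ℂ)) ^ m = Complex.exp (Complex.I * m * t) from by
        rw [← Complex.exp_nat_mul]; congr 1; ring]
    push_cast
    ring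
  have hD : Summable (fun m => fR p m |x| * ((1 : ℝ) ^ m / m.factorial)) :=
    (mainHasSum_real p |x| 1).summable
  have habs : ∀ m, |c m| ≤ fR p m |x| * ((1 : ℝ) ^ m / m.factorial) := by
    intro m
    rw [hc]
    simp only [one_pow]
    rw [abs_div, abs_of_nonneg (by positivity : (0:ℝ) ≤ (m.factorial : ℝ))]
    calc |fR p m x| / m.factorial ≤ fR p m |x| / m.factorial := by
          gcongr
          exact abs_fR_le p m x
      _ = fR p m |x| * (1 / m.factorial) := by ring
  have hcsum0 : Summable fun m => |c m| :=
    Summable.of_nonneg_of_le (fun m => abs_nonneg _) habs hD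
  have hcsumpi : Summable fun m => |c m| * Real.pi := hcsum0.mul_right _
  have hmeas : ∀ m : ℕ, MeasureTheory.AEStronglyMeasurable (G m)
      (MeasureTheory.volume.restrict (Set.Ioc 0 Real.pi)) := by
    intro m
    apply Continuous.aestronglyMeasurable
    rw [hG]
    fun_prop
  have hnormG : ∀ m t, ‖G m t‖ ≤ |c m| := by
    intro m t
    rw [hG]
    simp only
    rw [norm_mul, norm_mul, Complex.norm_real, Complex.norm_real]
    have h1 : ‖Complex.exp (Complex.I * m * t)‖ = 1 := by
      rw [show Complex.I * (m : ℂ) * (t : ℂ) = (((m : ℝ) * t : ℝ) : ℂ) * Complex.I by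
        push_cast; ring]
      exact Complex.norm_exp_ofReal_mul_I _
    rw [h1, Real.norm_eq_abs, Real.norm_eq_abs]
    calc |c m| * (1 * |Real.sin ((n:ℝ) * t)|) ≤ |c m| * (1 * 1) := by
          gcongr
          exact Real.abs_sin_le_one _
      _ = |c m| := by ring
  -- lintegral bound
  have hlint : ∀ m, (∫⁻ t in Set.Ioc (0:ℝ) Real.pi, ‖G m t‖₊) ≤ ENNReal.ofReal (|c m| * Real.pi) := by
    intro m
    calc (∫⁻ t in Set.Ioc (0:ℝ) Real.pi, (‖G m t‖₊ : ENNReal))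
        ≤ ∫⁻ _ in Set.Ioc (0:ℝ) Real.pi, (‖c m‖₊ : ENNReal) := by
          apply MeasureTheory.lintegral_mono
          intro t
          rw [ENNReal.coe_le_coe, ← NNReal.coe_le_coe, coe_nnnorm, coe_nnnorm,
            Real.norm_eq_abs]
          exact hnormG m t
      _ = (‖c m‖₊ : ENNReal) * MeasureTheory.volume (Set.Ioc (0:ℝ) Real.pi) := by
          rw [MeasureTheory.lintegral_const, MeasureTheory.Measure.restrict_apply_univ]
      _ = ENNReal.ofReal (|c m| * Real.pi) := by
          rw [Real.volume_Ioc, sub_zero, ← enorm_eq_nnnorm, ← ofReal_norm, Real.norm_eq_abs,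
            ← ENNReal.ofReal_mul (abs_nonneg _)]
  have hbound : (∑' m, ∫⁻ t in Set.Ioc (0:ℝ) Real.pi, ‖G m t‖₊) ≠ ⊤ := by
    apply ne_of_lt
    calc (∑' m, ∫⁻ t in Set.Ioc (0:ℝ) Real.pi, ‖G m t‖₊)
        ≤ ∑' m, ENNReal.ofReal (|c m| * Real.pi) := ENNReal.tsum_le_tsum hlint
      _ = ENNReal.ofReal (∑' m, |c m| * Real.pi) := by
          rw [ENNReal.ofReal_tsum_of_nonneg
            (fun m => mul_nonneg (abs_nonneg _) Real.pi_pos.le) hcsumpi]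
      _ < ⊤ := ENNReal.ofReal_lt_top
  -- each column integral
  have hGint : ∀ m, (∫ t in Set.Ioc (0:ℝ) Real.pi, G m t) = (c m : ℂ) *
      ∫ t in (0:ℝ)..Real.pi, Complex.exp (Complex.I * m * t) * (Real.sin ((n:ℝ) * t) : ℂ) := by
    intro m
    rw [← intervalIntegral.integral_of_le Real.pi_pos.le]
    rw [hG]
    simp only
    rw [intervalIntegral.integral_const_mul]
  have hintsummable : Summable (fun m => ∫ t in Set.Ioc (0:ℝ) Real.pi, G m t) := by
    apply Summable.of_norm_bounded (g := fun m => |c m| * Real.pi) hcsumpi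
    intro m
    rw [← intervalIntegral.integral_of_le Real.pi_pos.le]
    have h := intervalIntegral.norm_integral_le_of_norm_le_const
      (C := |c m|) (f := G m) (a := 0) (b := Real.pi) (fun t _ => hnormG m t)
    rw [sub_zero, abs_of_nonneg Real.pi_pos.le] at h
    exact h
  -- main computation
  have main : (∫ t in (0:ℝ)..Real.pi,
      Complex.exp (x * sigmaC p (Complex.exp (Complex.I * t))) * (Real.sin ((n:ℝ) * t) : ℂ)).im
        = (fR p n x / n.factorial) * (Real.pi / 2) := by
    rw [intervalIntegral.integral_of_le Real.pi_pos.le]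
    rw [show (fun t : ℝ => Complex.exp (x * sigmaC p (Complex.exp (Complex.I * t)))
        * (Real.sin ((n:ℝ) * t) : ℂ)) = fun t => ∑' m, G m t from
      funext fun t => ((HS t).tsum_eq).symm]
    rw [MeasureTheory.integral_tsum hmeas hbound]
    rw [Complex.im_tsum hintsummable]
    rw [tsum_eq_single n ?_]
    · rw [hGint n, Complex.im_ofReal_mul, J_eq n hn n, if_pos rfl, hc]
    · intro m hm
      rw [hGint m, Complex.im_ofReal_mul, J_eq n hn m, if_neg hm, mul_zero]
  rw [BellP_eq, main]
  have hfac : ((n.factorial : ℝ)) ≠ 0 := Nat.cast_ne_zero.2 n.factorial_ne_zero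
  field_simp
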